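/- arXiv:1705.08494 — 2 statements merged into one kernel-verified Lean document; each statement's English description precedes it below -/
import Mathlib

section
/- Under stochastic unbounded delays with constant step size γ > 0 and the stochastic block rule satisfying E‖∇_{i_k} f(x^{k−j(k)})‖₂² = (1/N)·Σ_{i=1}^{N} E‖∇_i f(x^{k−j(k)})‖₂² for all k, one has E‖∇f(x^k)‖₂² ≤ (8NL²/γ²)·E‖Δ^k‖₂² + (12N+2)L²·Σ_{i=0}^{k−1} s_{k−1−i}·E‖Δ^i‖₂² for all k. -/
open MeasureTheory Filter
open scoped BigOperators

lemma telescope_sum {M : Type*} [AddCommGroup M] (f : ℕ → M) :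
    ∀ {m n : ℕ}, m ≤ n → ∑ i ∈ Finset.Ico m n, (f (i+1) - f i) = f n - f m := by
  intro m n h
  induction n with
  | zero => interval_cases m; simp
  | succ n ih =>
    rcases Nat.lt_or_ge m (n+1) with h'|h'
    · rw [Finset.sum_Ico_succ_top (by omega), ih (by omega)]; abel
    · have : m = n+1 := by omega
      subst this; simp

lemma aux_restrict_le {Ω : Type} (m : MeasurableSpace Ω) [inst : MeasurableSpace Ω]
    (μ : Measure Ω) (hm : m ≤ inst)
    (g : Ω → ℝ) (hg0 : ∀ ω, 0 ≤ g ω) (hgm : @Measurable _ _ m _ g)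
    (B : Set Ω) (c : ℝ) (hc : 0 ≤ c)
    (hbound : ∀ A : Set Ω, MeasurableSet[m] A → μ (A ∩ B) ≤ ENNReal.ofReal c * μ A)
    (hint : Integrable g μ) :
    ∫ ω in B, g ω ∂μ ≤ c * ∫ ω, g ω ∂μ := by
  have hgm' : Measurable g := hgm.mono hm le_rfl
  have hnn : (0 : Ω → ℝ) ≤ᵐ[μ] g := Filter.Eventually.of_forall hg0
  have hnnB : (0 : Ω → ℝ) ≤ᵐ[μ.restrict B] g := Filter.Eventually.of_forall hg0
  have key : ∫⁻ ω in B, ENNReal.ofReal (g ω) ∂μ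
      ≤ ENNReal.ofReal c * ∫⁻ ω, ENNReal.ofReal (g ω) ∂μ := by
    rw [lintegral_eq_lintegral_meas_lt (μ.restrict B) hnnB hgm'.aemeasurable,
      lintegral_eq_lintegral_meas_lt μ hnn hgm'.aemeasurable,
      ← lintegral_const_mul' _ _ ENNReal.ofReal_ne_top]
    refine lintegral_mono fun t => ?_
    rw [Measure.restrict_apply (measurableSet_lt measurable_const hgm')]
    exact hbound _ (measurableSet_lt (@measurable_const _ _ _ m _) hgm)
  have hfin : ∫⁻ ω, ENNReal.ofReal (g ω) ∂μ < ⊤ := hint.lintegral_lt_top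
  rw [integral_eq_lintegral_of_nonneg_ae hnnB hint.restrict.aestronglyMeasurable,
    integral_eq_lintegral_of_nonneg_ae hnn hint.aestronglyMeasurable]
  calc (∫⁻ ω in B, ENNReal.ofReal (g ω) ∂μ).toReal
      ≤ (ENNReal.ofReal c * ∫⁻ ω, ENNReal.ofReal (g ω) ∂μ).toReal := by
        apply ENNReal.toReal_mono _ key
        exact (ENNReal.mul_lt_top ENNReal.ofReal_lt_top hfin).ne
    _ = c * (∫⁻ ω, ENNReal.ofReal (g ω) ∂μ).toReal := by
        rw [ENNReal.toReal_mul, ENNReal.toReal_ofReal hc]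

lemma meas_finset_sup {Ω : Type} [MeasurableSpace Ω] {N : ℕ}
    (g : Ω → Fin N → ℕ) (hg : Measurable g) (s : Finset (Fin N)) :
    Measurable fun ω => s.sup (g ω) := by
  classical
  induction s using Finset.induction_on with
  | empty => simp only [Finset.sup_empty]; exact measurable_const
  | insert _ _ _ ih =>
    simp only [Finset.sup_insert]
    exact Measurable.max ((measurable_pi_apply _).comp hg) ih

lemma meas_delay {Ω : Type} [MeasurableSpace Ω] {M : Type} [MeasurableSpace M]
    [AddCommMonoid M] [MeasurableAdd₂ M]
    (k : ℕ) (J : Ω → ℕ) (hJ : Measurable J) (hJk : ∀ ω, J ω ≤ k)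
    (F : ℕ → Ω → M) (hF : ∀ m, Measurable (F m)) :
    Measurable fun ω => F (k - J ω) ω := by
  classical
  have heq : (fun ω => F (k - J ω) ω)
      = fun ω => ∑ m ∈ Finset.range (k+1), (J ⁻¹' {m}).indicator (F (k - m)) ω := by
    funext ω
    rw [Finset.sum_eq_single_of_mem (J ω) (Finset.mem_range.mpr (Nat.lt_succ_of_le (hJk ω)))]
    · rw [Set.indicator_of_mem (by simp : ω ∈ J ⁻¹' {J ω})]
    · intro m _ hm
      exact Set.indicator_of_notMem (by simp [Ne.symm hm]) _
  rw [heq]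
  exact Finset.measurable_sum _ fun m _ =>
    (hF (k - m)).indicator (hJ (measurableSet_singleton m))

lemma normsq_euclid {n : ℕ} (v : EuclideanSpace ℝ (Fin n)) : ‖v‖^2 = ∑ i, ‖v i‖^2 := by
  rw [EuclideanSpace.norm_eq, Real.sq_sqrt]
  positivity

lemma coordsq_le {n : ℕ} (v : EuclideanSpace ℝ (Fin n)) (i : Fin n) : ‖v i‖^2 ≤ ‖v‖^2 := by
  rw [normsq_euclid]
  exact Finset.single_le_sum (f := fun j => ‖v j‖^2) (fun j _ => sq_nonneg _) (Finset.mem_univ i)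

set_option maxHeartbeats 2000000 in
theorem expected_gradient_bound_unbounded
    (N : ℕ) (hN : 0 < N)
    (f : EuclideanSpace ℝ (Fin N) → ℝ)
    (L : ℝ) (hL : 0 < L)
    (hdiff : Differentiable ℝ f)
    (hlip : ∀ y z : EuclideanSpace ℝ (Fin N), ‖gradient f y - gradient f z‖ ≤ L * ‖y - z‖)
    (fmin : ℝ) (hfmin : ∀ y, fmin ≤ f y)
    (Ω : Type) [MeasurableSpace Ω] (μ : Measure Ω) [IsProbabilityMeasure μ]
    (X : ℕ → Ω → EuclideanSpace ℝ (Fin N)) (hXm : ∀ k, Measurable (X k))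
    (jv : ℕ → Ω → Fin N → ℕ) (hjvm : ∀ k, Measurable (jv k))
    (hjk : ∀ k ω i, jv k ω i ≤ k)
    (xhat : ℕ → Ω → EuclideanSpace ℝ (Fin N))
    (hxhat : ∀ k ω i, xhat k ω i = X (k - jv k ω i) ω i)
    (ik : ℕ → Ω → Fin N) (hikm : ∀ k, Measurable (ik k))
    (p : ℕ → ℝ) (hp : ∀ j, 0 ≤ p j)
    (hpbound : ∀ k j : ℕ, ∀ A : Set Ω,
      MeasurableSet[(⨆ l ∈ Finset.range (k+1), MeasurableSpace.comap (X l) inferInstance) ⊔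
        (⨆ l ∈ Finset.range (k+1), MeasurableSpace.comap (jv l) inferInstance)] A →
      μ (A ∩ {ω | Finset.univ.sup (jv k ω) = j}) ≤ ENNReal.ofReal (p j) * μ A)
    (s cf : ℕ → ℝ)
    (hs : ∀ l : ℕ, HasSum (fun j : ℕ => if l ≤ j then (j : ℝ) * p j else 0) (s l))
    (hcf : ∀ i : ℕ, HasSum (fun l : ℕ => if i ≤ l then s l else 0) (cf i))
    (γ : ℝ) (hγ : 0 < γ)
    (hupd : ∀ k ω, X (k+1) ω (ik k ω) = X k ω (ik k ω) - (γ / L) * gradient f (xhat k ω) (ik k ω))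
    (hfix : ∀ k ω i, i ≠ ik k ω → X (k+1) ω i = X k ω i)
    (hIf : ∀ k, Integrable (fun ω => f (X k ω)) μ)
    (hID2 : ∀ k, Integrable (fun ω => ‖X (k+1) ω - X k ω‖ ^ 2) μ)
    (hId2 : ∀ k, Integrable (fun ω => ‖X k ω - xhat k ω‖ ^ 2) μ)
    (hIg2 : ∀ k, Integrable (fun ω => ‖gradient f (X k ω)‖ ^ 2) μ)
    (hblock : ∀ k : ℕ,
      ∫ ω, ‖gradient f (X (k - Finset.univ.sup (jv k ω)) ω) (ik k ω)‖ ^ 2 ∂μ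
        = (1 / (N : ℝ)) * ∑ i : Fin N, ∫ ω, ‖gradient f (X (k - Finset.univ.sup (jv k ω)) ω) i‖ ^ 2 ∂μ)
    (hIgd2 : ∀ k, Integrable (fun ω => ‖gradient f (X (k - Finset.univ.sup (jv k ω)) ω)‖ ^ 2) μ)
    (hIgd2c : ∀ k, Integrable (fun ω => ‖gradient f (X (k - Finset.univ.sup (jv k ω)) ω) (ik k ω)‖ ^ 2) μ)
    :
    ∀ k : ℕ,
      ∫ ω, ‖gradient f (X k ω)‖ ^ 2 ∂μ
        ≤ (8 * (N : ℝ) * L ^ 2 / γ ^ 2) * ∫ ω, ‖X (k+1) ω - X k ω‖ ^ 2 ∂μ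
          + (12 * (N : ℝ) + 2) * L ^ 2 *
              ∑ i ∈ Finset.range k, s (k - 1 - i) * ∫ ω, ‖X (i+1) ω - X i ω‖ ^ 2 ∂μ := by
  classical
  intro k
  have hLnn : (0:ℝ) ≤ L := hL.le
  have hL2 : (0:ℝ) < L^2 := by positivity
  have hN1 : (1:ℝ) ≤ (N:ℝ) := by exact_mod_cast hN
  -- continuity of the gradient
  have hgc : Continuous (gradient f) := by
    have : LipschitzWith (Real.toNNReal L) (gradient f) := by
      apply LipschitzWith.of_dist_le_mul
      intro y z
      rw [dist_eq_norm, dist_eq_norm, Real.coe_toNNReal _ hLnn]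
      exact hlip y z
    exact this.continuous
  have hlipsq : ∀ y z : EuclideanSpace ℝ (Fin N),
      ‖gradient f y - gradient f z‖^2 ≤ L^2 * ‖y - z‖^2 := by
    intro y z
    nlinarith [hlip y z, norm_nonneg (gradient f y - gradient f z), norm_nonneg (y - z)]
  -- the delay J and delayed iterate Y
  set J : Ω → ℕ := fun ω => Finset.univ.sup (jv k ω) with hJ
  have hJm : Measurable J := meas_finset_sup _ (hjvm k) _
  have hJk' : ∀ ω, J ω ≤ k := fun ω => Finset.sup_le fun i _ => hjk k ω i
  set Y : Ω → EuclideanSpace ℝ (Fin N) := fun ω => X (k - J ω) ω with hY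
  have hYm : Measurable Y := meas_delay k J hJm hJk' X hXm
  have hxhm : Measurable (xhat k) := by
    refine (WithLp.measurable_toLp 2 (Fin N → ℝ)).comp (f := fun ω => (xhat k ω).ofLp) ?_
    apply measurable_pi_lambda
    intro i
    have heq : (fun ω => xhat k ω i)
        = fun ω => (fun m ω' => X m ω' i) (k - (fun ω' => jv k ω' i) ω) ω :=
      funext fun ω => hxhat k ω i
    rw [heq]
    exact meas_delay k _ ((measurable_pi_apply i).comp (hjvm k)) (fun ω => hjk k ω i) _
      (fun m => (measurable_pi_apply i).comp ((WithLp.measurable_ofLp 2 _).comp (hXm m)))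
  -- the dominating function G
  set G : Ω → ℝ := fun ω => (J ω : ℝ) *
      ∑ i ∈ Finset.range k, (if k - J ω ≤ i then ‖X (i+1) ω - X i ω‖^2 else 0) with hGdef
  have hsum_ite_nonneg : ∀ ω, 0 ≤ ∑ i ∈ Finset.range k,
      (if k - J ω ≤ i then ‖X (i+1) ω - X i ω‖^2 else 0) := by
    intro ω
    refine Finset.sum_nonneg fun i _ => ?_
    split
    · exact sq_nonneg _
    · exact le_rfl
  have hG0 : ∀ ω, 0 ≤ G ω := fun ω =>
    mul_nonneg (Nat.cast_nonneg _) (hsum_ite_nonneg ω)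
  have hGm : Measurable G := by
    apply Measurable.mul
    · exact (measurable_from_nat (f := fun n : ℕ => (n:ℝ))).comp hJm
    · refine Finset.measurable_sum _ fun i _ => Measurable.ite ?_ ?_ measurable_const
      · have hm : Measurable fun ω => k - J ω := (measurable_from_nat).comp hJm
        have : {ω : Ω | k - J ω ≤ i} = (fun ω => k - J ω) ⁻¹' {m : ℕ | m ≤ i} := rfl
        rw [this]
        exact hm (by trivial)
      · exact ((continuous_pow 2).comp continuous_norm).measurable.comp
          ((hXm (i+1)).sub (hXm i))
  have hGbound : ∀ ω, G ω ≤ (k:ℝ) * ∑ i ∈ Finset.range k, ‖X (i+1) ω - X i ω‖^2 := by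
    intro ω
    apply mul_le_mul (by exact_mod_cast hJk' ω) ?_ (hsum_ite_nonneg ω) (Nat.cast_nonneg _)
    refine Finset.sum_le_sum fun i _ => ?_
    split
    · exact le_rfl
    · exact sq_nonneg _
  have hIG : Integrable G μ := by
    refine Integrable.mono' ((integrable_finset_sum (Finset.range k)
      (fun i _ => hID2 i)).const_mul (k:ℝ)) hGm.aestronglyMeasurable
      (Filter.Eventually.of_forall fun ω => ?_)
    rw [Real.norm_eq_abs, abs_of_nonneg (hG0 ω)]
    exact hGbound ω
  -- pointwise bound ‖X k - Y‖² ≤ G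
  have hIcoFilter : ∀ m : ℕ, Finset.Ico m k = (Finset.range k).filter (fun i => m ≤ i) := by
    intro m
    ext x
    simp only [Finset.mem_Ico, Finset.mem_filter, Finset.mem_range]
    tauto
  have hptA4 : ∀ ω, ‖X k ω - Y ω‖^2 ≤ G ω := by
    intro ω
    have htel : X k ω - Y ω = ∑ i ∈ Finset.Ico (k - J ω) k, (X (i+1) ω - X i ω) := by
      rw [hY]
      exact (telescope_sum (fun m => X m ω) (Nat.sub_le k (J ω))).symm
    have h1 : ‖X k ω - Y ω‖ ≤ ∑ i ∈ Finset.Ico (k - J ω) k, ‖X (i+1) ω - X i ω‖ := by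
      rw [htel]; exact norm_sum_le _ _
    calc ‖X k ω - Y ω‖^2 ≤ (∑ i ∈ Finset.Ico (k - J ω) k, ‖X (i+1) ω - X i ω‖)^2 := by
          exact pow_le_pow_left₀ (norm_nonneg _) h1 2
      _ ≤ ((Finset.Ico (k - J ω) k).card : ℝ) *
            ∑ i ∈ Finset.Ico (k - J ω) k, ‖X (i+1) ω - X i ω‖^2 :=
          sq_sum_le_card_mul_sum_sq
      _ = G ω := by
          rw [Nat.card_Ico, Nat.sub_sub_self (hJk' ω), hIcoFilter, Finset.sum_filter]
  -- pointwise bound ‖Y - xhat‖² ≤ G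
  have hptA5 : ∀ ω, ‖Y ω - xhat k ω‖^2 ≤ G ω := by
    intro ω
    have hns : ‖Y ω - xhat k ω‖^2 = ∑ i, ‖Y ω i - xhat k ω i‖^2 := by
      rw [normsq_euclid]
      exact Finset.sum_congr rfl fun i _ => by rw [PiLp.sub_apply]
    have hcoord : ∀ i : Fin N, ‖Y ω i - xhat k ω i‖^2
        ≤ (J ω : ℝ) * ∑ l ∈ Finset.Ico (k - J ω) k, ‖X (l+1) ω i - X l ω i‖^2 := by
      intro i
      have hle : k - J ω ≤ k - jv k ω i :=
        Nat.sub_le_sub_left (Finset.le_sup (Finset.mem_univ i)) k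
      have htel : xhat k ω i - Y ω i
          = ∑ l ∈ Finset.Ico (k - J ω) (k - jv k ω i), (X (l+1) ω i - X l ω i) := by
        rw [hxhat k ω i, hY]
        exact (telescope_sum (fun m => X m ω i) hle).symm
      have habs : ‖Y ω i - xhat k ω i‖ ≤ ∑ l ∈ Finset.Ico (k - J ω) k, ‖X (l+1) ω i - X l ω i‖ := by
        rw [norm_sub_rev, htel]
        refine le_trans (norm_sum_le _ _) (Finset.sum_le_sum_of_subset_of_nonneg ?_ ?_)
        · exact Finset.Ico_subset_Ico_right (Nat.sub_le k _)
        · intro l _ _; exact norm_nonneg _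
      calc ‖Y ω i - xhat k ω i‖^2
          ≤ (∑ l ∈ Finset.Ico (k - J ω) k, ‖X (l+1) ω i - X l ω i‖)^2 :=
            pow_le_pow_left₀ (norm_nonneg _) habs 2
        _ ≤ ((Finset.Ico (k - J ω) k).card : ℝ) *
              ∑ l ∈ Finset.Ico (k - J ω) k, ‖X (l+1) ω i - X l ω i‖^2 :=
            sq_sum_le_card_mul_sum_sq
        _ = (J ω : ℝ) * ∑ l ∈ Finset.Ico (k - J ω) k, ‖X (l+1) ω i - X l ω i‖^2 := by
            rw [Nat.card_Ico, Nat.sub_sub_self (hJk' ω)]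
    calc ‖Y ω - xhat k ω‖^2 = ∑ i, ‖Y ω i - xhat k ω i‖^2 := hns
      _ ≤ ∑ i : Fin N, (J ω : ℝ) * ∑ l ∈ Finset.Ico (k - J ω) k, ‖X (l+1) ω i - X l ω i‖^2 :=
          Finset.sum_le_sum fun i _ => hcoord i
      _ = (J ω : ℝ) * ∑ l ∈ Finset.Ico (k - J ω) k, ∑ i : Fin N, ‖X (l+1) ω i - X l ω i‖^2 := by
          rw [← Finset.mul_sum, Finset.sum_comm]
      _ = G ω := by
          rw [hGdef]
          simp only [hIcoFilter, Finset.sum_filter]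
          congr 1
          refine Finset.sum_congr rfl fun l _ => ?_
          congr 1
          rw [normsq_euclid]
          exact Finset.sum_congr rfl fun i _ => by rw [PiLp.sub_apply]
  -- the sub-sigma-algebra and the conditional bound
  have hGle : ((⨆ l ∈ Finset.range (k+1), MeasurableSpace.comap (X l) inferInstance) ⊔
      (⨆ l ∈ Finset.range (k+1), MeasurableSpace.comap (jv l) inferInstance))
      ≤ (inferInstance : MeasurableSpace Ω) := by
    apply sup_le
    · exact iSup_le fun l => iSup_le fun _ => measurable_iff_comap_le.mp (hXm l)
    · exact iSup_le fun l => iSup_le fun _ => measurable_iff_comap_le.mp (hjvm l)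
  have hDmeasG : ∀ i ∈ Finset.range k,
      Measurable[(⨆ l ∈ Finset.range (k+1), MeasurableSpace.comap (X l) inferInstance) ⊔
        (⨆ l ∈ Finset.range (k+1), MeasurableSpace.comap (jv l) inferInstance)]
        (fun ω => ‖X (i+1) ω - X i ω‖^2) := by
    intro i hi
    rw [Finset.mem_range] at hi
    have hXl : ∀ l, l ∈ Finset.range (k+1) →
        Measurable[(⨆ l ∈ Finset.range (k+1), MeasurableSpace.comap (X l) inferInstance) ⊔
          (⨆ l ∈ Finset.range (k+1), MeasurableSpace.comap (jv l) inferInstance)] (X l) := by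
      intro l hl
      rw [measurable_iff_comap_le]
      exact le_trans (le_biSup (fun l => MeasurableSpace.comap (X l) inferInstance) hl) le_sup_left
    have h1 := hXl (i+1) (Finset.mem_range.mpr (by omega))
    have h2 := hXl i (Finset.mem_range.mpr (by omega))
    exact ((continuous_pow 2).comp continuous_norm).measurable.comp (h1.sub h2)
  have hrestr : ∀ j : ℕ, ∀ i ∈ Finset.range k,
      ∫ ω in {ω | Finset.univ.sup (jv k ω) = j}, ‖X (i+1) ω - X i ω‖^2 ∂μ
        ≤ p j * ∫ ω, ‖X (i+1) ω - X i ω‖^2 ∂μ :=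
    fun j i hi => aux_restrict_le _ μ hGle _ (fun ω => sq_nonneg _) (hDmeasG i hi) _
      (p j) (hp j) (hpbound k j) (hID2 i)
  -- decomposition of ∫ G
  have hBm : ∀ j : ℕ, MeasurableSet {ω : Ω | Finset.univ.sup (jv k ω) = j} :=
    fun j => hJm (measurableSet_singleton j)
  have hIφ : ∀ j : ℕ, Integrable (fun ω => (j:ℝ) *
      ∑ i ∈ Finset.range k, (if k - j ≤ i then ‖X (i+1) ω - X i ω‖^2 else 0)) μ := by
    intro j
    refine Integrable.const_mul (integrable_finset_sum _ fun i _ => ?_) _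
    by_cases h : k - j ≤ i
    · simp only [if_pos h]; exact hID2 i
    · simp only [if_neg h]; exact integrable_const 0
  have hGdecomp : ∀ ω, G ω = ∑ j ∈ Finset.range (k+1),
      ({ω : Ω | Finset.univ.sup (jv k ω) = j}).indicator (fun ω => (j:ℝ) *
        ∑ i ∈ Finset.range k, (if k - j ≤ i then ‖X (i+1) ω - X i ω‖^2 else 0)) ω := by
    intro ω
    rw [Finset.sum_eq_single_of_mem (J ω) (Finset.mem_range.mpr (Nat.lt_succ_of_le (hJk' ω)))]
    · rw [Set.indicator_of_mem (by exact rfl : ω ∈ {ω' : Ω | Finset.univ.sup (jv k ω') = J ω})]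
    · intro m _ hm
      refine Set.indicator_of_notMem (fun hmem => hm ?_) _
      exact (Set.mem_setOf_eq ▸ hmem).symm
  have hsplit : ∫ ω, G ω ∂μ = ∑ j ∈ Finset.range (k+1),
      ∫ ω in {ω : Ω | Finset.univ.sup (jv k ω) = j}, ((j:ℝ) *
        ∑ i ∈ Finset.range k, (if k - j ≤ i then ‖X (i+1) ω - X i ω‖^2 else 0)) ∂μ := by
    rw [integral_congr_ae (Filter.Eventually.of_forall hGdecomp),
      integral_finset_sum _ (fun j _ => (hIφ j).indicator (hBm j))]
    exact Finset.sum_congr rfl fun j _ => integral_indicator (hBm j)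
  have hsetint : ∀ j : ℕ,
      ∫ ω in {ω : Ω | Finset.univ.sup (jv k ω) = j}, ((j:ℝ) *
        ∑ i ∈ Finset.range k, (if k - j ≤ i then ‖X (i+1) ω - X i ω‖^2 else 0)) ∂μ
      = (j:ℝ) * ∑ i ∈ Finset.range k, (if k - j ≤ i then
          ∫ ω in {ω : Ω | Finset.univ.sup (jv k ω) = j}, ‖X (i+1) ω - X i ω‖^2 ∂μ else 0) := by
    intro j
    rw [integral_const_mul]
    congr 1
    rw [integral_finset_sum _ (fun i _ => ?_)]
    · refine Finset.sum_congr rfl fun i _ => ?_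
      by_cases h : k - j ≤ i
      · simp only [if_pos h]
      · simp only [if_neg h, integral_zero]
    · by_cases h : k - j ≤ i
      · simp only [if_pos h]; exact (hID2 i).restrict
      · simp only [if_neg h]; exact integrable_const 0
  -- nonnegativity facts about s and the integrals
  have hq0 : ∀ i : ℕ, 0 ≤ ∫ ω, ‖X (i+1) ω - X i ω‖^2 ∂μ :=
    fun i => integral_nonneg fun ω => sq_nonneg _
  have hs_anti : ∀ l : ℕ, s (l+1) ≤ s l := by
    intro l
    refine hasSum_le (fun j => ?_) (hs (l+1)) (hs l)
    split_ifs with h1 h2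
    · exact le_rfl
    · omega
    · exact mul_nonneg (Nat.cast_nonneg _) (hp j)
    · exact le_rfl
  have hs0 : ∀ l : ℕ, 0 ≤ s l := by
    intro l
    refine hasSum_le (fun j => ?_) hasSum_zero (hs l)
    split_ifs with h1
    · exact mul_nonneg (Nat.cast_nonneg _) (hp j)
    · exact le_rfl
  -- the key bound on ∫ G
  have hTS : ∫ ω, G ω ∂μ ≤ ∑ i ∈ Finset.range k,
      s (k - 1 - i) * ∫ ω, ‖X (i+1) ω - X i ω‖^2 ∂μ := by
    rw [hsplit]
    calc ∑ j ∈ Finset.range (k+1),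
        ∫ ω in {ω : Ω | Finset.univ.sup (jv k ω) = j}, ((j:ℝ) *
          ∑ i ∈ Finset.range k, (if k - j ≤ i then ‖X (i+1) ω - X i ω‖^2 else 0)) ∂μ
        ≤ ∑ j ∈ Finset.range (k+1), (j:ℝ) * ∑ i ∈ Finset.range k,
            (if k - j ≤ i then p j * ∫ ω, ‖X (i+1) ω - X i ω‖^2 ∂μ else 0) := by
          refine Finset.sum_le_sum fun j _ => ?_
          rw [hsetint j]
          refine mul_le_mul_of_nonneg_left (Finset.sum_le_sum fun i hi => ?_) (Nat.cast_nonneg _)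
          by_cases h : k - j ≤ i
          · simp only [if_pos h]; exact hrestr j i hi
          · simp only [if_neg h]; exact le_rfl
      _ = ∑ i ∈ Finset.range k, (∑ j ∈ Finset.range (k+1),
            (if k - i ≤ j then (j:ℝ) * p j else 0)) * ∫ ω, ‖X (i+1) ω - X i ω‖^2 ∂μ := by
          calc ∑ j ∈ Finset.range (k+1), (j:ℝ) * ∑ i ∈ Finset.range k,
                (if k - j ≤ i then p j * ∫ ω, ‖X (i+1) ω - X i ω‖^2 ∂μ else 0)
              = ∑ j ∈ Finset.range (k+1), ∑ i ∈ Finset.range k,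
                  (if k - j ≤ i then (j:ℝ) * p j * ∫ ω, ‖X (i+1) ω - X i ω‖^2 ∂μ else 0) := by
                refine Finset.sum_congr rfl fun j _ => ?_
                rw [Finset.mul_sum]
                refine Finset.sum_congr rfl fun i _ => ?_
                split_ifs <;> ring
            _ = ∑ i ∈ Finset.range k, ∑ j ∈ Finset.range (k+1),
                  (if k - j ≤ i then (j:ℝ) * p j * ∫ ω, ‖X (i+1) ω - X i ω‖^2 ∂μ else 0) :=
                Finset.sum_comm
            _ = ∑ i ∈ Finset.range k, (∑ j ∈ Finset.range (k+1),
                  (if k - i ≤ j then (j:ℝ) * p j else 0)) * ∫ ω, ‖X (i+1) ω - X i ω‖^2 ∂μ := by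
                refine Finset.sum_congr rfl fun i _ => ?_
                rw [Finset.sum_mul]
                refine Finset.sum_congr rfl fun j _ => ?_
                have hc : (k - j ≤ i) ↔ (k - i ≤ j) := by omega
                simp only [hc]
                split_ifs <;> ring
      _ ≤ ∑ i ∈ Finset.range k,
            s (k - 1 - i) * ∫ ω, ‖X (i+1) ω - X i ω‖^2 ∂μ := by
          refine Finset.sum_le_sum fun i hi => ?_
          refine mul_le_mul_of_nonneg_right ?_ (hq0 i)
          have h1 : ∑ j ∈ Finset.range (k+1), (if k - i ≤ j then (j:ℝ) * p j else 0) ≤ s (k - i) := by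
            refine sum_le_hasSum _ (fun j _ => ?_) (hs (k - i))
            split_ifs with h
            · exact mul_nonneg (Nat.cast_nonneg _) (hp j)
            · exact le_rfl
          have h2 : k - i = (k - 1 - i) + 1 := by
            rw [Finset.mem_range] at hi; omega
          refine le_trans h1 ?_
          rw [h2]
          exact hs_anti _
  -- integrability of the various quantities
  have hmgY : Measurable fun ω => gradient f (Y ω) := hgc.measurable.comp hYm
  have hsqabs : ∀ x : ℝ, ‖x‖ = x → True := fun _ _ => trivial
  have II2 : Integrable (fun ω => ‖X k ω - Y ω‖^2) μ := by
    refine Integrable.mono' hIG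
      ((((continuous_pow 2).comp continuous_norm).measurable.comp
        ((hXm k).sub hYm)).aestronglyMeasurable)
      (Filter.Eventually.of_forall fun ω => ?_)
    rw [Real.norm_eq_abs, abs_of_nonneg (sq_nonneg _)]
    exact hptA4 ω
  have I3 : Integrable (fun ω => ‖Y ω - xhat k ω‖^2) μ := by
    refine Integrable.mono' hIG
      ((((continuous_pow 2).comp continuous_norm).measurable.comp
        (hYm.sub hxhm)).aestronglyMeasurable)
      (Filter.Eventually.of_forall fun ω => ?_)
    rw [Real.norm_eq_abs, abs_of_nonneg (sq_nonneg _)]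
    exact hptA5 ω
  have IIgY : Integrable (fun ω => ‖gradient f (Y ω)‖^2) μ := by
    simp only [hY, hJ]; exact hIgd2 k
  have hIYik : Integrable (fun ω => ‖gradient f (Y ω) (ik k ω)‖^2) μ := by
    simp only [hY, hJ]; exact hIgd2c k
  have hbl : ∫ ω, ‖gradient f (Y ω) (ik k ω)‖^2 ∂μ
      = (1/(N:ℝ)) * ∑ i : Fin N, ∫ ω, ‖gradient f (Y ω) i‖^2 ∂μ := by
    simp only [hY, hJ]; exact hblock k
  have Ici : ∀ i : Fin N, Integrable (fun ω => ‖gradient f (Y ω) i‖^2) μ := by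
    intro i
    refine Integrable.mono' IIgY
      ((((continuous_pow 2).comp continuous_norm).measurable.comp
        ((measurable_pi_apply i).comp ((WithLp.measurable_ofLp 2 _).comp hmgY))).aestronglyMeasurable)
      (Filter.Eventually.of_forall fun ω => ?_)
    rw [Real.norm_eq_abs, abs_of_nonneg (sq_nonneg _)]
    exact coordsq_le _ i
  -- Step I
  have hstepI : ∫ ω, ‖gradient f (X k ω)‖^2 ∂μ
      ≤ 2*L^2 * (∫ ω, ‖X k ω - Y ω‖^2 ∂μ) + 2 * ∫ ω, ‖gradient f (Y ω)‖^2 ∂μ := by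
    have hpt : ∀ ω, ‖gradient f (X k ω)‖^2
        ≤ 2*L^2*‖X k ω - Y ω‖^2 + 2*‖gradient f (Y ω)‖^2 := by
      intro ω
      have h1 : ‖gradient f (X k ω) - gradient f (Y ω)‖^2 ≤ L^2 * ‖X k ω - Y ω‖^2 :=
        hlipsq _ _
      have h2 : ‖gradient f (X k ω)‖ - ‖gradient f (Y ω)‖
          ≤ ‖gradient f (X k ω) - gradient f (Y ω)‖ := norm_sub_norm_le _ _
      nlinarith [norm_nonneg (gradient f (X k ω)), norm_nonneg (gradient f (Y ω)),
        norm_nonneg (gradient f (X k ω) - gradient f (Y ω)),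
        sq_nonneg (‖gradient f (X k ω) - gradient f (Y ω)‖ - ‖gradient f (Y ω)‖)]
    have h : ∫ ω, ‖gradient f (X k ω)‖^2 ∂μ
        ≤ ∫ ω, (2*L^2*‖X k ω - Y ω‖^2 + 2*‖gradient f (Y ω)‖^2) ∂μ :=
      integral_mono (hIg2 k) ((II2.const_mul (2*L^2)).add (IIgY.const_mul 2)) hpt
    rwa [integral_add (II2.const_mul _) (IIgY.const_mul _), integral_const_mul,
      integral_const_mul] at h
  -- Step II
  have hstepII : ∫ ω, ‖gradient f (Y ω)‖^2 ∂μ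
      = (N:ℝ) * ∫ ω, ‖gradient f (Y ω) (ik k ω)‖^2 ∂μ := by
    have hsum : ∫ ω, ‖gradient f (Y ω)‖^2 ∂μ
        = ∑ i : Fin N, ∫ ω, ‖gradient f (Y ω) i‖^2 ∂μ := by
      rw [← integral_finset_sum _ (fun i _ => Ici i)]
      exact integral_congr_ae (Filter.Eventually.of_forall fun ω => normsq_euclid _)
    have hNne : (N:ℝ) ≠ 0 := by positivity
    rw [hsum, hbl]
    field_simp
  -- Step III
  have hstepIII : ∫ ω, ‖gradient f (Y ω) (ik k ω)‖^2 ∂μ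
      ≤ 2*(L^2/γ^2) * (∫ ω, ‖X (k+1) ω - X k ω‖^2 ∂μ)
        + 2*L^2 * ∫ ω, ‖Y ω - xhat k ω‖^2 ∂μ := by
    have hpt : ∀ ω, ‖gradient f (Y ω) (ik k ω)‖^2
        ≤ 2*(L^2/γ^2)*‖X (k+1) ω - X k ω‖^2 + 2*L^2*‖Y ω - xhat k ω‖^2 := by
      intro ω
      have habs : ∀ x : ℝ, ‖x‖^2 = x^2 := fun x => by rw [Real.norm_eq_abs, sq_abs]
      have hab2 : (gradient f (Y ω) (ik k ω) - gradient f (xhat k ω) (ik k ω))^2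
          ≤ L^2 * ‖Y ω - xhat k ω‖^2 := by
        have h1 := coordsq_le (gradient f (Y ω) - gradient f (xhat k ω)) (ik k ω)
        rw [PiLp.sub_apply, habs] at h1
        exact le_trans h1 (hlipsq _ _)
      have hL0 : L ≠ 0 := ne_of_gt hL
      have hbval : γ * gradient f (xhat k ω) (ik k ω)
          = L * (X k ω (ik k ω) - X (k+1) ω (ik k ω)) := by
        have h := hupd k ω
        field_simp at h ⊢
        linarith
      have hd : (X k ω (ik k ω) - X (k+1) ω (ik k ω))^2 ≤ ‖X (k+1) ω - X k ω‖^2 := by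
        have h1 := coordsq_le (X (k+1) ω - X k ω) (ik k ω)
        rw [PiLp.sub_apply, habs] at h1
        nlinarith [h1]
      have hb2 : γ^2 * (gradient f (xhat k ω) (ik k ω))^2
          = L^2 * (X k ω (ik k ω) - X (k+1) ω (ik k ω))^2 := by
        have h := congrArg (fun t => t^2) hbval
        simp only [mul_pow] at h
        exact h
      have hg2 : (0:ℝ) < γ^2 := by positivity
      have hbb : (gradient f (xhat k ω) (ik k ω))^2
          ≤ L^2/γ^2 * ‖X (k+1) ω - X k ω‖^2 := by
        rw [div_mul_eq_mul_div, le_div_iff₀ hg2]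
        nlinarith [hb2, hd, hL2]
      rw [habs]
      nlinarith [hab2, hbb,
        sq_nonneg (gradient f (Y ω) (ik k ω) - 2*gradient f (xhat k ω) (ik k ω))]
    have h : ∫ ω, ‖gradient f (Y ω) (ik k ω)‖^2 ∂μ
        ≤ ∫ ω, (2*(L^2/γ^2)*‖X (k+1) ω - X k ω‖^2 + 2*L^2*‖Y ω - xhat k ω‖^2) ∂μ :=
      integral_mono hIYik (((hID2 k).const_mul (2*(L^2/γ^2))).add (I3.const_mul (2*L^2))) hpt
    rwa [integral_add ((hID2 k).const_mul _) (I3.const_mul _), integral_const_mul,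
      integral_const_mul] at h
  -- assembly
  have hA4 : ∫ ω, ‖X k ω - Y ω‖^2 ∂μ ≤ ∫ ω, G ω ∂μ := integral_mono II2 hIG hptA4
  have hA5 : ∫ ω, ‖Y ω - xhat k ω‖^2 ∂μ ≤ ∫ ω, G ω ∂μ := integral_mono I3 hIG hptA5
  have hTG0 : 0 ≤ ∫ ω, G ω ∂μ := integral_nonneg hG0
  have hS0 : 0 ≤ ∑ i ∈ Finset.range k, s (k-1-i) * ∫ ω, ‖X (i+1) ω - X i ω‖^2 ∂μ :=
    Finset.sum_nonneg fun i _ => mul_nonneg (hs0 _) (hq0 i)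
  have hA30 : 0 ≤ ∫ ω, ‖gradient f (Y ω) (ik k ω)‖^2 ∂μ :=
    integral_nonneg fun ω => sq_nonneg _
  have e1 : ∫ ω, ‖gradient f (X k ω)‖^2 ∂μ
      ≤ 2*L^2 * (∫ ω, G ω ∂μ)
        + 2 * ((N:ℝ) * ∫ ω, ‖gradient f (Y ω) (ik k ω)‖^2 ∂μ) := by
    rw [hstepII] at hstepI
    have := mul_le_mul_of_nonneg_left hA4 (show (0:ℝ) ≤ 2*L^2 by positivity)
    linarith
  have e2 : (N:ℝ) * ∫ ω, ‖gradient f (Y ω) (ik k ω)‖^2 ∂μ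
      ≤ (N:ℝ) * (2*(L^2/γ^2) * (∫ ω, ‖X (k+1) ω - X k ω‖^2 ∂μ)
          + 2*L^2 * ∫ ω, G ω ∂μ) := by
    refine mul_le_mul_of_nonneg_left ?_ (Nat.cast_nonneg N)
    have := mul_le_mul_of_nonneg_left hA5 (show (0:ℝ) ≤ 2*L^2 by positivity)
    linarith
  have m1 : (2*L^2 + 4*(N:ℝ)*L^2) * (∫ ω, G ω ∂μ)
      ≤ (12*(N:ℝ)+2)*L^2 * ∑ i ∈ Finset.range k,
          s (k-1-i) * ∫ ω, ‖X (i+1) ω - X i ω‖^2 ∂μ := by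
    have c1 := mul_le_mul_of_nonneg_left hTS (show (0:ℝ) ≤ 2*L^2 + 4*(N:ℝ)*L^2 by positivity)
    have c2 : (0:ℝ) ≤ (8*(N:ℝ))*L^2 * ∑ i ∈ Finset.range k,
        s (k-1-i) * ∫ ω, ‖X (i+1) ω - X i ω‖^2 ∂μ :=
      mul_nonneg (by positivity) hS0
    linarith [c1, c2]
  have m2 : 4*(N:ℝ)*(L^2/γ^2) * (∫ ω, ‖X (k+1) ω - X k ω‖^2 ∂μ)
      ≤ 8*(N:ℝ)*L^2/γ^2 * ∫ ω, ‖X (k+1) ω - X k ω‖^2 ∂μ := by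
    have h0 : (0:ℝ) ≤ (N:ℝ)*(L^2/γ^2) * ∫ ω, ‖X (k+1) ω - X k ω‖^2 ∂μ :=
      mul_nonneg (by positivity) (hq0 k)
    have heq : 8*(N:ℝ)*L^2/γ^2 * ∫ ω, ‖X (k+1) ω - X k ω‖^2 ∂μ
        = 4*(N:ℝ)*(L^2/γ^2) * (∫ ω, ‖X (k+1) ω - X k ω‖^2 ∂μ)
          + 4*((N:ℝ)*(L^2/γ^2) * ∫ ω, ‖X (k+1) ω - X k ω‖^2 ∂μ) := by ring
    rw [heq]
    linarith [h0]
  linarith [e1, e2, m1, m2]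
end

section
/- (Sufficient descent for deterministic unbounded delays.) The Lyapunov function H_k := f(x^k) + (L/2)·Σ_{i=1}^{∞} κ_i‖Δ^{k−i}‖₂² satisfies H_k − H_{k+1} ≥ L·(1/γ_k − D_{j(k)})·‖Δ^k‖₂² for all k, and lim_{k→∞} ‖Δ^k‖₂ = 0. Moreover, for any T ≥ liminf_k j(k), along the subsequence Q_T := {k ∈ ℕ : j(k) ≤ T} one has lim_{(k∈Q_T)→∞} ‖d^k‖₂ = 0 and lim_{(k∈Q_T)→∞} ‖∇_{i_k} f(x̂^k)‖₂ = 0. -/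
open MeasureTheory Filter
open scoped BigOperators


lemma descent_lemma {E : Type*} [NormedAddCommGroup E] [InnerProductSpace ℝ E] [CompleteSpace E]
    (f : E → ℝ) (L : ℝ)
    (hdiff : Differentiable ℝ f)
    (hlip : ∀ y z : E, ‖gradient f y - gradient f z‖ ≤ L * ‖y - z‖)
    (x v : E) :
    f (x + v) ≤ f x + inner ℝ (gradient f x) v + L / 2 * ‖v‖ ^ 2 := by
  set g : ℝ → ℝ := fun t => f (x + t • v) - t * inner ℝ (gradient f x) v - L / 2 * ‖v‖ ^ 2 * t ^ 2 with hg
  have hd : ∀ t : ℝ, HasDerivAt g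
      ((inner ℝ (gradient f (x + t • v)) v : ℝ) - inner ℝ (gradient f x) v - L * ‖v‖ ^ 2 * t) t := by
    intro t
    have h1 : HasDerivAt (fun t : ℝ => x + t • v) v t := by
      simpa using ((hasDerivAt_id t).smul_const v).const_add x
    have h2 : HasFDerivAt f (InnerProductSpace.toDual ℝ E (gradient f (x + t • v))) (x + t • v) :=
      (hdiff (x + t • v)).hasGradientAt.hasFDerivAt
    have h3 : HasDerivAt (fun t : ℝ => f (x + t • v)) (inner ℝ (gradient f (x + t • v)) v : ℝ) t := by
      have h := h2.comp_hasDerivAt t h1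
      exact h
    have h4 : HasDerivAt (fun t : ℝ => t * inner ℝ (gradient f x) v) (inner ℝ (gradient f x) v : ℝ) t := by
      simpa using (hasDerivAt_id t).mul_const (inner ℝ (gradient f x) v : ℝ)
    have h5 : HasDerivAt (fun t : ℝ => L / 2 * ‖v‖ ^ 2 * t ^ 2) (L * ‖v‖ ^ 2 * t) t := by
      have := (hasDerivAt_pow 2 t).const_mul (L / 2 * ‖v‖ ^ 2)
      exact this.congr_deriv (by norm_num; ring)
    exact (h3.sub h4).sub h5
  have hanti : AntitoneOn g (Set.Ici (0:ℝ)) := by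
    apply antitoneOn_of_hasDerivWithinAt_nonpos (convex_Ici 0)
      (fun t _ => (hd t).continuousAt.continuousWithinAt)
      (fun t _ => (hd t).hasDerivWithinAt)
    intro t ht
    rw [interior_Ici] at ht
    have ht0 : (0:ℝ) < t := ht
    have hb : (inner ℝ (gradient f (x + t • v)) v : ℝ) - inner ℝ (gradient f x) v ≤ L * ‖v‖ ^ 2 * t := by
      have h1 : (inner ℝ (gradient f (x + t • v)) v : ℝ) - inner ℝ (gradient f x) v
          = inner ℝ (gradient f (x + t • v) - gradient f x) v := by
        rw [inner_sub_left]
      rw [h1]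
      calc (inner ℝ (gradient f (x + t • v) - gradient f x) v : ℝ)
          ≤ ‖gradient f (x + t • v) - gradient f x‖ * ‖v‖ := real_inner_le_norm _ _
        _ ≤ (L * ‖x + t • v - x‖) * ‖v‖ := by
            apply mul_le_mul_of_nonneg_right (hlip _ _) (norm_nonneg v)
        _ = L * ‖v‖ ^ 2 * t := by
            simp [norm_smul, abs_of_pos ht0]
            ring
    linarith
  have := hanti (Set.self_mem_Ici) (by norm_num : (1:ℝ) ∈ Set.Ici (0:ℝ)) zero_le_one
  simp only [hg, zero_smul, add_zero, zero_mul, one_smul, one_mul, one_pow, mul_one] at this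
  linarith


section helpers

lemma young_ineq (ε A B : ℝ) (hε : 0 < ε) :
    A * B ≤ ε / 2 * A ^ 2 + 1 / (2 * ε) * B ^ 2 := by
  rw [← sub_nonneg]
  have h : ε / 2 * A ^ 2 + 1 / (2 * ε) * B ^ 2 - A * B = (ε * A - B) ^ 2 / (2 * ε) := by
    field_simp; ring
  rw [h]; positivity

lemma eu_coord_le {N : ℕ} (v : EuclideanSpace ℝ (Fin N)) (i : Fin N) : |v i| ≤ ‖v‖ := by
  rw [EuclideanSpace.norm_eq, ← Real.sqrt_sq_eq_abs]
  apply Real.sqrt_le_sqrt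
  have : v i ^ 2 ≤ ∑ j : Fin N, ‖v j‖ ^ 2 := by
    have := Finset.single_le_sum (f := fun j => ‖v j‖ ^ 2)
      (fun j _ => by positivity) (Finset.mem_univ i)
    simpa [Real.norm_eq_abs, sq_abs] using this
  simpa using this

lemma eu_norm_abs {N : ℕ} (w v : EuclideanSpace ℝ (Fin N)) (h : ∀ i, w i = |v i|) :
    ‖w‖ = ‖v‖ := by
  rw [EuclideanSpace.norm_eq, EuclideanSpace.norm_eq]
  congr 1
  apply Finset.sum_congr rfl
  intro i _
  simp [h i, Real.norm_eq_abs, abs_abs]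

end helpers

lemma eu_norm_mono' {N : ℕ} (a b : EuclideanSpace ℝ (Fin N))
    (h : ∀ i, |a i| ≤ b i) : ‖a‖ ≤ ‖b‖ := by
  rw [EuclideanSpace.norm_eq, EuclideanSpace.norm_eq]
  apply Real.sqrt_le_sqrt
  apply Finset.sum_le_sum
  intro i _
  have h1 := h i
  have h2 : (0:ℝ) ≤ b i := le_trans (abs_nonneg _) h1
  simp only [Real.norm_eq_abs]
  nlinarith [abs_nonneg (a i), sq_abs (a i), sq_abs (b i)]

lemma telescope_coord' {N : ℕ} (x : ℕ → EuclideanSpace ℝ (Fin N)) (i : Fin N) :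
    ∀ k j : ℕ, j ≤ k → x k i - x (k - j) i
      = ∑ t ∈ Finset.Icc 1 j, (x (k - t + 1) i - x (k - t) i) := by
  intro k j
  induction j with
  | zero => simp
  | succ j ih =>
      intro hjk
      have hj : j ≤ k := Nat.le_of_succ_le hjk
      rw [Finset.sum_Icc_succ_top (by omega : 1 ≤ j + 1)]
      rw [← ih hj]
      have h1 : k - (j+1) + 1 = k - j := by omega
      rw [h1]
      ring

lemma d_bound {N : ℕ} (x : ℕ → EuclideanSpace ℝ (Fin N)) (k : ℕ)
    (jvk : Fin N → ℕ) (hjk : ∀ i, jvk i ≤ k)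
    (xh : EuclideanSpace ℝ (Fin N)) (hxh : ∀ i, xh i = x (k - jvk i) i)
    (M : ℕ) (hM : ∀ i, jvk i ≤ M) :
    ‖x k - xh‖ ≤ ∑ t ∈ Finset.Icc 1 M, ‖x (k - t + 1) - x (k - t)‖ := by
  set V : ℕ → EuclideanSpace ℝ (Fin N) := fun t => WithLp.toLp 2 (fun i => |(x (k - t + 1) - x (k - t)) i|) with hV
  set b : EuclideanSpace ℝ (Fin N) := ∑ t ∈ Finset.Icc 1 M, V t with hb
  have hbi : ∀ i, b i = ∑ t ∈ Finset.Icc 1 M, |x (k - t + 1) i - x (k - t) i| := by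
    intro i
    rw [hb]
    rw [WithLp.ofLp_sum, Finset.sum_apply]
    apply Finset.sum_congr rfl
    intro t _
    simp [hV]
  have key : ‖x k - xh‖ ≤ ‖b‖ := by
    apply eu_norm_mono'
    intro i
    rw [hbi i]
    have h0 : (x k - xh) i = x k i - x (k - jvk i) i := by simp [hxh i]
    rw [h0, telescope_coord' x i k (jvk i) (hjk i)]
    calc |∑ t ∈ Finset.Icc 1 (jvk i), (x (k - t + 1) i - x (k - t) i)|
        ≤ ∑ t ∈ Finset.Icc 1 (jvk i), |x (k - t + 1) i - x (k - t) i| :=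
          Finset.abs_sum_le_sum_abs _ _
      _ ≤ ∑ t ∈ Finset.Icc 1 M, |x (k - t + 1) i - x (k - t) i| := by
          apply Finset.sum_le_sum_of_subset_of_nonneg
          · apply Finset.Icc_subset_Icc_right (hM i)
          · intro t _ _; exact abs_nonneg _
  refine le_trans key ?_
  rw [hb]
  refine le_trans (norm_sum_le _ _) ?_
  apply Finset.sum_le_sum
  intro t _
  exact le_of_eq (eu_norm_abs (V t) (x (k - t + 1) - x (k - t)) (fun i => rfl))

lemma kappa_diff (εs κ : ℕ → ℝ)
    (hκ : ∀ i : ℕ, HasSum (fun j : ℕ => if i ≤ j then εs j else 0) (κ i)) (j : ℕ) :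
    κ j - κ (j + 1) = εs j := by
  have h1 := (hκ j).sub (hκ (j + 1))
  have h2 : (fun m => (if j ≤ m then εs m else 0) - if j + 1 ≤ m then εs m else 0)
      = fun m => if m = j then εs j else 0 := by
    funext m
    by_cases hm : m = j
    · subst hm; simp
    · by_cases hm2 : j ≤ m
      · have : j + 1 ≤ m := by omega
        simp [hm, hm2, this]
      · have : ¬ (j + 1 ≤ m) := by omega
        simp [hm, hm2, this]
  rw [h2] at h1
  exact h1.unique (hasSum_ite_eq j (εs j))

lemma kappa_nonneg (εs κ : ℕ → ℝ) (hεs : ∀ i, 0 < εs i)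
    (hκ : ∀ i : ℕ, HasSum (fun j : ℕ => if i ≤ j then εs j else 0) (κ i)) (i : ℕ) :
    0 ≤ κ i := by
  refine hasSum_le (fun m => ?_) hasSum_zero (hκ i)
  by_cases h : i ≤ m
  · simp [h, (hεs m).le]
  · simp [h]

lemma eu_norm_single {N : ℕ} (w : EuclideanSpace ℝ (Fin N)) (i0 : Fin N)
    (h : ∀ i, i ≠ i0 → w i = 0) : ‖w‖ = |w i0| := by
  rw [EuclideanSpace.norm_eq]
  rw [Finset.sum_eq_single i0]
  · rw [← Real.sqrt_sq_eq_abs]; norm_num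
  · intro i _ hi; rw [h i hi]; simp
  · simp

lemma eu_inner_single {N : ℕ} (u w : EuclideanSpace ℝ (Fin N)) (i0 : Fin N)
    (h : ∀ i, i ≠ i0 → w i = 0) : (inner ℝ u w : ℝ) = u i0 * w i0 := by
  rw [PiLp.inner_apply]
  rw [Finset.sum_eq_single i0]
  · simp [RCLike.inner_apply, mul_comm]
  · intro i _ hi; rw [h i hi]; simp
  · simp

lemma eu_norm_mono {N : ℕ} (a b : EuclideanSpace ℝ (Fin N))
    (h : ∀ i, |a i| ≤ b i) : ‖a‖ ≤ ‖b‖ := by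
  rw [EuclideanSpace.norm_eq, EuclideanSpace.norm_eq]
  apply Real.sqrt_le_sqrt
  apply Finset.sum_le_sum
  intro i _
  have h1 := h i
  have h2 : (0:ℝ) ≤ b i := le_trans (abs_nonneg _) h1
  simp only [Real.norm_eq_abs]
  nlinarith [abs_nonneg (a i), sq_abs (a i), sq_abs (b i)]

lemma telescope_coord {N : ℕ} (x : ℕ → EuclideanSpace ℝ (Fin N)) (i : Fin N) :
    ∀ k j : ℕ, j ≤ k → x k i - x (k - j) i
      = ∑ t ∈ Finset.Icc 1 j, (x (k - t + 1) i - x (k - t) i) := by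
  intro k j
  induction j with
  | zero => simp
  | succ j ih =>
      intro hjk
      have hj : j ≤ k := Nat.le_of_succ_le hjk
      rw [Finset.sum_Icc_succ_top (by omega : 1 ≤ j + 1)]
      rw [← ih hj]
      have h1 : k - (j+1) + 1 = k - j := by omega
      rw [h1]
      ring

theorem sufficient_descent_deterministic_unbounded
    (N : ℕ) (hN : 0 < N)
    (f : EuclideanSpace ℝ (Fin N) → ℝ)
    (L : ℝ) (hL : 0 < L)
    (hdiff : Differentiable ℝ f)
    (hlip : ∀ y z : EuclideanSpace ℝ (Fin N), ‖gradient f y - gradient f z‖ ≤ L * ‖y - z‖)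
    (fmin : ℝ) (hfmin : ∀ y, fmin ≤ f y)
    (x : ℕ → EuclideanSpace ℝ (Fin N))
    (ik : ℕ → Fin N)
    (jv : ℕ → Fin N → ℕ)
    (hjk : ∀ k i, jv k i ≤ k)
    (xhat : ℕ → EuclideanSpace ℝ (Fin N))
    (hxhat : ∀ k i, xhat k i = x (k - jv k i) i)
    (εs : ℕ → ℝ) (hεs : ∀ i, 0 < εs i)
    (κ : ℕ → ℝ) (hκ : ∀ i : ℕ, HasSum (fun j : ℕ => if i ≤ j then εs j else 0) (κ i))
    (Dd : ℕ → ℝ) (hDd : ∀ m : ℕ, Dd m = 1 / 2 + κ 1 / 2 + ∑ i ∈ Finset.Icc 1 m, 1 / (2 * εs i))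
    (c : ℝ) (hc : 0 < c) (hc1 : c < 1)
    (γ : ℕ → ℝ) (hγ : ∀ k, γ k = c / Dd (Finset.univ.sup (jv k)))
    (hliminf : ∃ T0 : ℕ, ∃ᶠ k in atTop, Finset.univ.sup (jv k) ≤ T0)
    (hupd : ∀ k, x (k+1) (ik k) = x k (ik k) - (γ k / L) * gradient f (xhat k) (ik k))
    (hfix : ∀ k i, i ≠ ik k → x (k+1) i = x k i)
    :
    (∀ k : ℕ,
      (f (x k) + (L / 2) * ∑ i ∈ Finset.Icc 1 k, κ i * ‖x (k - i + 1) - x (k - i)‖ ^ 2)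
        - (f (x (k+1)) + (L / 2) * ∑ i ∈ Finset.Icc 1 (k+1), κ i * ‖x (k + 1 - i + 1) - x (k + 1 - i)‖ ^ 2)
        ≥ L * (1 / γ k - Dd (Finset.univ.sup (jv k))) * ‖x (k+1) - x k‖ ^ 2) ∧
    Tendsto (fun k => ‖x (k+1) - x k‖) atTop (nhds 0) ∧
    (∀ T : ℕ, (∃ᶠ k in atTop, Finset.univ.sup (jv k) ≤ T) →
      Tendsto (fun k => ‖x k - xhat k‖)
        (atTop ⊓ Filter.principal {k | Finset.univ.sup (jv k) ≤ T}) (nhds 0) ∧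
      Tendsto (fun k => ‖gradient f (xhat k) (ik k)‖)
        (atTop ⊓ Filter.principal {k | Finset.univ.sup (jv k) ≤ T}) (nhds 0)) := by
  set J : ℕ → ℕ := fun k => Finset.univ.sup (jv k) with hJ
  have hJk : ∀ k, J k ≤ k := fun k => Finset.sup_le (fun i _ => hjk k i)
  have hκn : ∀ i, 0 ≤ κ i := kappa_nonneg εs κ hεs hκ
  have hEnn : ∀ m : ℕ, (0:ℝ) ≤ ∑ i ∈ Finset.Icc 1 m, 1 / (2 * εs i) :=
    fun m => Finset.sum_nonneg fun i _ => by have := hεs i; positivity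
  have hDhalf : ∀ m, 1 / 2 ≤ Dd m := by
    intro m; rw [hDd m]
    have := hκn 1
    have := hEnn m
    linarith
  have hDpos : ∀ m, 0 < Dd m := fun m => lt_of_lt_of_le (by norm_num) (hDhalf m)
  have hDmono : ∀ {m m' : ℕ}, m ≤ m' → Dd m ≤ Dd m' := by
    intro m m' hmm
    rw [hDd m, hDd m']
    have : ∑ i ∈ Finset.Icc 1 m, 1 / (2 * εs i) ≤ ∑ i ∈ Finset.Icc 1 m', 1 / (2 * εs i) := by
      apply Finset.sum_le_sum_of_subset_of_nonneg (Finset.Icc_subset_Icc_right hmm)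
      intro i _ _; have := hεs i; positivity
    linarith
  have hγpos : ∀ k, 0 < γ k := fun k => by rw [hγ k]; exact div_pos hc (hDpos _)
  have hinvγ : ∀ k, 1 / γ k = Dd (J k) / c := fun k => by rw [hγ k, one_div_div]
  -- coordinates of the increment
  have hΔ0 : ∀ k i, i ≠ ik k → (x (k+1) - x k) i = 0 := by
    intro k i hi
    have : (x (k+1) - x k) i = x (k+1) i - x k i := rfl
    rw [this, hfix k i hi, sub_self]
  have hΔik : ∀ k, (x (k+1) - x k) (ik k) = -(γ k / L * gradient f (xhat k) (ik k)) := by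
    intro k
    have : (x (k+1) - x k) (ik k) = x (k+1) (ik k) - x k (ik k) := rfl
    rw [this, hupd k]; ring
  have hnormΔ : ∀ k, ‖x (k+1) - x k‖ = γ k / L * |gradient f (xhat k) (ik k)| := by
    intro k
    rw [eu_norm_single _ (ik k) (hΔ0 k), hΔik k, abs_neg, abs_mul,
      abs_of_pos (div_pos (hγpos k) hL)]
  -- Part 1
  have hstep : ∀ k : ℕ,
      (f (x k) + (L / 2) * ∑ i ∈ Finset.Icc 1 k, κ i * ‖x (k - i + 1) - x (k - i)‖ ^ 2)
        - (f (x (k+1)) + (L / 2) * ∑ i ∈ Finset.Icc 1 (k+1), κ i * ‖x (k + 1 - i + 1) - x (k + 1 - i)‖ ^ 2)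
        ≥ L * (1 / γ k - Dd (J k)) * ‖x (k+1) - x k‖ ^ 2 := by
    intro k
    set g : ℝ := gradient f (xhat k) (ik k) with hg
    set nΔ : ℝ := ‖x (k+1) - x k‖ with hnd
    set dk : ℝ := ‖x k - xhat k‖ with hdk0
    set P : ℝ := ∑ t ∈ Finset.Icc 1 (J k), εs t * ‖x (k - t + 1) - x (k - t)‖ ^ 2 with hP
    set Q : ℝ := ∑ t ∈ Finset.Icc 1 k, εs t * ‖x (k - t + 1) - x (k - t)‖ ^ 2 with hQ
    set E : ℝ := ∑ t ∈ Finset.Icc 1 (J k), 1 / (2 * εs t) with hE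
    -- descent inequality
    have h1 : f (x (k+1)) ≤ f (x k) + inner ℝ (gradient f (x k)) (x (k+1) - x k) + L / 2 * nΔ ^ 2 := by
      have := descent_lemma f L hdiff hlip (x k) (x (k+1) - x k)
      simpa using this
    -- inner product decomposition
    have hip : (inner ℝ (gradient f (x k)) (x (k+1) - x k) : ℝ)
        = gradient f (x k) (ik k) * (x (k+1) - x k) (ik k) :=
      eu_inner_single _ _ (ik k) (hΔ0 k)
    have h3 : g * (x (k+1) - x k) (ik k) = -(L * (1 / γ k) * nΔ ^ 2) := by
      rw [hΔik k, hnd, hnormΔ k]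
      have hγ0 : γ k ≠ 0 := (hγpos k).ne'
      have hL0 : L ≠ 0 := hL.ne'
      rw [mul_pow, sq_abs]
      field_simp
      ring
    have h4 : (gradient f (x k) (ik k) - g) * (x (k+1) - x k) (ik k) ≤ L * (dk * nΔ) := by
      have e1 : |gradient f (x k) (ik k) - g| ≤ L * dk := by
        have : gradient f (x k) (ik k) - g = (gradient f (x k) - gradient f (xhat k)) (ik k) := rfl
        rw [this]
        exact le_trans (eu_coord_le _ _) (hlip (x k) (xhat k))
      have e2 : |(x (k+1) - x k) (ik k)| ≤ nΔ := eu_coord_le _ _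
      calc (gradient f (x k) (ik k) - g) * (x (k+1) - x k) (ik k)
          ≤ |(gradient f (x k) (ik k) - g) * (x (k+1) - x k) (ik k)| := le_abs_self _
        _ = |gradient f (x k) (ik k) - g| * |(x (k+1) - x k) (ik k)| := abs_mul _ _
        _ ≤ (L * dk) * nΔ := by
            apply mul_le_mul e1 e2 (abs_nonneg _)
            positivity
        _ = L * (dk * nΔ) := by ring
    -- delay bound + Young
    have hdkb : dk ≤ ∑ t ∈ Finset.Icc 1 (J k), ‖x (k - t + 1) - x (k - t)‖ :=
      d_bound x k (jv k) (hjk k) (xhat k) (hxhat k) (J k)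
        (fun i => Finset.le_sup (Finset.mem_univ i))
    have h5 : L * (dk * nΔ) ≤ L * (P / 2 + E * nΔ ^ 2) := by
      apply mul_le_mul_of_nonneg_left _ hL.le
      calc dk * nΔ ≤ (∑ t ∈ Finset.Icc 1 (J k), ‖x (k - t + 1) - x (k - t)‖) * nΔ :=
            mul_le_mul_of_nonneg_right hdkb (norm_nonneg _)
        _ = ∑ t ∈ Finset.Icc 1 (J k), ‖x (k - t + 1) - x (k - t)‖ * nΔ := Finset.sum_mul _ _ _
        _ ≤ ∑ t ∈ Finset.Icc 1 (J k),
              (εs t / 2 * ‖x (k - t + 1) - x (k - t)‖ ^ 2 + 1 / (2 * εs t) * nΔ ^ 2) := by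
            apply Finset.sum_le_sum
            intro t _
            exact young_ineq (εs t) _ _ (hεs t)
        _ = P / 2 + E * nΔ ^ 2 := by
            rw [Finset.sum_add_distrib, hP, hE, Finset.sum_div, Finset.sum_mul]
            congr 1
            · apply Finset.sum_congr rfl; intro t _; ring
    have h6 : L * P ≤ L * Q := by
      apply mul_le_mul_of_nonneg_left _ hL.le
      apply Finset.sum_le_sum_of_subset_of_nonneg (Finset.Icc_subset_Icc_right (hJk k))
      intro t _ _; have := (hεs t).le; positivity
    -- Lyapunov sum reindexing
    have h7 : (∑ i ∈ Finset.Icc 1 (k+1), κ i * ‖x (k + 1 - i + 1) - x (k + 1 - i)‖ ^ 2)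
        = κ 1 * nΔ ^ 2 + ∑ j ∈ Finset.Icc 1 k, κ (j+1) * ‖x (k - j + 1) - x (k - j)‖ ^ 2 := by
      have hre : (∑ i ∈ Finset.Icc 1 (k+1), κ i * ‖x (k + 1 - i + 1) - x (k + 1 - i)‖ ^ 2)
          = ∑ j ∈ Finset.Icc 0 k, κ (j+1) * ‖x (k + 1 - (j+1) + 1) - x (k + 1 - (j+1))‖ ^ 2 := by
        rw [← Finset.Ico_add_one_right_eq_Icc, ← Finset.Ico_add_one_right_eq_Icc,
          Finset.sum_Ico_eq_sum_range, Finset.sum_Ico_eq_sum_range]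
        simp [add_comm]
      rw [hre]
      have h0 : Finset.Icc 0 k = insert 0 (Finset.Icc 1 k) := by
        ext t; simp; omega
      rw [h0, Finset.sum_insert (by simp)]
      have hsum : ∑ j ∈ Finset.Icc 1 k, κ (j + 1) * ‖x (k + 1 - (j + 1) + 1) - x (k + 1 - (j + 1))‖ ^ 2
          = ∑ j ∈ Finset.Icc 1 k, κ (j+1) * ‖x (k - j + 1) - x (k - j)‖ ^ 2 := by
        apply Finset.sum_congr rfl
        intro j hj
        have hjk' : j ≤ k := (Finset.mem_Icc.mp hj).2
        have e1 : k + 1 - (j+1) + 1 = k - j + 1 := by omega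
        have e2 : k + 1 - (j+1) = k - j := by omega
        rw [e1, e2]
      rw [hsum, hnd]
      norm_num
    have h8 : (∑ i ∈ Finset.Icc 1 k, κ i * ‖x (k - i + 1) - x (k - i)‖ ^ 2)
        - (∑ j ∈ Finset.Icc 1 k, κ (j+1) * ‖x (k - j + 1) - x (k - j)‖ ^ 2) = Q := by
      rw [← Finset.sum_sub_distrib, hQ]
      apply Finset.sum_congr rfl
      intro j _
      rw [← sub_mul, kappa_diff εs κ hκ j]
    have h9 : Dd (J k) = 1 / 2 + κ 1 / 2 + E := by rw [hDd (J k), hE]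
    rw [ge_iff_le]
    rw [h7]
    have hIP : (inner ℝ (gradient f (x k)) (x (k+1) - x k) : ℝ)
        = g * (x (k+1) - x k) (ik k) + (gradient f (x k) (ik k) - g) * (x (k+1) - x k) (ik k) := by
      rw [hip]; ring
    rw [hIP] at h1
    rw [h3] at h1
    have h9' : L * Dd (J k) * nΔ ^ 2 = L * (1 / 2 + κ 1 / 2 + E) * nΔ ^ 2 := by rw [h9]
    have h8' : L / 2 * (∑ i ∈ Finset.Icc 1 k, κ i * ‖x (k - i + 1) - x (k - i)‖ ^ 2)
        - L / 2 * (∑ j ∈ Finset.Icc 1 k, κ (j+1) * ‖x (k - j + 1) - x (k - j)‖ ^ 2)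
        = L / 2 * Q := by rw [← h8]; ring
    linarith [h1, h4, h5, h6, h8', h9']
  -- the Lyapunov function
  set S : ℕ → ℝ := fun k => ∑ i ∈ Finset.Icc 1 k, κ i * ‖x (k - i + 1) - x (k - i)‖ ^ 2 with hS
  set H : ℕ → ℝ := fun k => f (x k) + (L / 2) * S k with hH
  have hSnn : ∀ k, 0 ≤ S k := by
    intro k
    apply Finset.sum_nonneg
    intro i _
    have := hκn i
    positivity
  set ρ : ℝ := (1 - c) / (2 * c) with hρdef
  have hρ : 0 < ρ := by
    apply div_pos (by linarith) (by linarith)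
  have hstep' : ∀ k, L * ρ * ‖x (k+1) - x k‖ ^ 2 ≤ H k - H (k+1) := by
    intro k
    have h1 := hstep k
    have h2 : L * ρ * ‖x (k+1) - x k‖ ^ 2 ≤ L * (1 / γ k - Dd (J k)) * ‖x (k+1) - x k‖ ^ 2 := by
      apply mul_le_mul_of_nonneg_right _ (sq_nonneg _)
      apply mul_le_mul_of_nonneg_left _ hL.le
      rw [hinvγ k, hρdef]
      have hDh := hDhalf (J k)
      have hcne : c ≠ 0 := hc.ne'
      rw [div_sub' hcne, div_le_div_iff₀ (by linarith) (by positivity)]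
      have hx1 : (0:ℝ) ≤ (1 - c) * c * (2 * Dd (J k) - 1) := by
        apply mul_nonneg (mul_nonneg (by linarith) hc.le)
        linarith [hDh]
      nlinarith [hx1]
    exact le_trans h2 (le_of_le_of_eq h1.le (by rw [hH]))
  have hmono : ∀ k, H (k+1) ≤ H k := by
    intro k
    have h1 := hstep' k
    have h2 : 0 ≤ L * ρ * ‖x (k+1) - x k‖ ^ 2 := by positivity
    linarith
  have hanti : Antitone H := antitone_nat_of_succ_le hmono
  have hbdd : BddBelow (Set.range H) := by
    refine ⟨fmin, ?_⟩
    rintro y ⟨k, rfl⟩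
    have h1 := hfmin (x k)
    have h2 := hSnn k
    have : H k = f (x k) + (L / 2) * S k := rfl
    rw [this]
    nlinarith
  have hHtend : Tendsto H atTop (nhds (⨅ k, H k)) := tendsto_atTop_ciInf hanti hbdd
  have hdiff0 : Tendsto (fun k => H k - H (k+1)) atTop (nhds 0) := by
    have h2 : Tendsto (fun k => H (k+1)) atTop (nhds (⨅ k, H k)) :=
      hHtend.comp (tendsto_add_atTop_nat 1)
    simpa using hHtend.sub h2
  have hsq : Tendsto (fun k => ‖x (k+1) - x k‖ ^ 2) atTop (nhds 0) := by
    have hLρ : 0 < L * ρ := mul_pos hL hρ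
    apply squeeze_zero (fun k => sq_nonneg _) (fun k => ?_)
      (g := fun k => (H k - H (k+1)) / (L * ρ))
    · simpa using hdiff0.div_const (L * ρ)
    · rw [le_div_iff₀ hLρ]
      have := hstep' k
      linarith
  have part2 : Tendsto (fun k => ‖x (k+1) - x k‖) atTop (nhds 0) := by
    have hcont : Tendsto Real.sqrt (nhds 0) (nhds 0) := by
      simpa using (Real.continuous_sqrt.tendsto 0)
    have h2 := hcont.comp hsq
    have h3 : (fun k => Real.sqrt (‖x (k+1) - x k‖ ^ 2)) = fun k => ‖x (k+1) - x k‖ := by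
      funext k; exact Real.sqrt_sq (norm_nonneg _)
    rw [← h3]
    exact h2
  refine ⟨hstep, part2, ?_⟩
  intro T hT
  set l := atTop ⊓ Filter.principal {k : ℕ | J k ≤ T} with hl
  have hmemT : ∀ᶠ k in l, J k ≤ T := by
    rw [hl]
    exact eventually_inf_principal.mpr (Eventually.of_forall fun k hk => hk)
  have hup : Tendsto (fun k => ∑ t ∈ Finset.Icc 1 T, ‖x (k - t + 1) - x (k - t)‖)
      atTop (nhds 0) := by
    have h1 : ∀ t ∈ Finset.Icc 1 T,
        Tendsto (fun k : ℕ => ‖x (k - t + 1) - x (k - t)‖) atTop (nhds 0) := by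
      intro t _
      exact part2.comp (tendsto_sub_atTop_nat t)
    have := tendsto_finset_sum (Finset.Icc 1 T) h1
    simpa using this
  constructor
  · apply squeeze_zero' (Eventually.of_forall fun k => norm_nonneg _)
      (g := fun k => ∑ t ∈ Finset.Icc 1 T, ‖x (k - t + 1) - x (k - t)‖)
    · refine hmemT.mono fun k hk => ?_
      exact d_bound x k (jv k) (hjk k) (xhat k) (hxhat k) T
        (fun i => le_trans (Finset.le_sup (Finset.mem_univ i)) hk)
    · exact hup.mono_left inf_le_left
  · apply squeeze_zero' (Eventually.of_forall fun k => norm_nonneg _)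
      (g := fun k => L * Dd T / c * ‖x (k+1) - x k‖)
    · refine hmemT.mono fun k hk => ?_
      have hγ0 : γ k ≠ 0 := (hγpos k).ne'
      have hg1 : |gradient f (xhat k) (ik k)| = L / γ k * ‖x (k+1) - x k‖ := by
        rw [hnormΔ k]
        field_simp
      have hg2 : L / γ k ≤ L * Dd T / c := by
        calc L / γ k = L * (Dd (J k) / c) := by rw [div_eq_mul_one_div, hinvγ k]
          _ ≤ L * (Dd T / c) := by
              have hdd : Dd (J k) / c ≤ Dd T / c := by
                gcongr
                exact hDmono hk
              exact mul_le_mul_of_nonneg_left hdd hL.le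
          _ = L * Dd T / c := by ring
      rw [Real.norm_eq_abs, hg1]
      exact mul_le_mul_of_nonneg_right hg2 (norm_nonneg _)
    · have h2 : Tendsto (fun k => L * Dd T / c * ‖x (k+1) - x k‖) atTop (nhds 0) := by
        have := part2.const_mul (L * Dd T / c)
        simpa using this
      exact h2.mono_left inf_le_left
end
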